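/- arXiv:1603.06657 — 4 statements merged into one kernel-verified Lean document; each statement's English description precedes it below -/
import Mathlib

section
/- The q-binomial theorem: for 0 < q < 1 and complex a, z with |z| < 1, Σ_{n≥0} ((a; q)_n / (q; q)_n) z^n = (az; q)_∞ / (z; q)_∞. -/
open Complex Filter

/-- Finite q-Pochhammer symbol `(a; q)_n`. -/
noncomputable def qPochN (a q : ℂ) (n : ℕ) : ℂ := ∏ k ∈ Finset.range n, (1 - a * q ^ k)

/-- Infinite q-Pochhammer symbol `(a; q)_∞`. -/
noncomputable def qPochInf (a q : ℂ) : ℂ := ∏' k : ℕ, (1 - a * q ^ k)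

noncomputable def qc (a q : ℂ) (n : ℕ) : ℂ := qPochN a q n / qPochN q q n

lemma qden_ne {q : ℝ} (hq : 0 < q) (hq1 : q < 1) (n : ℕ) : qPochN (q:ℂ) (q:ℂ) n ≠ 0 := by
  unfold qPochN
  apply Finset.prod_ne_zero_iff.2
  intro k _
  have h1 : (q:ℂ) * (q:ℂ)^k = ((q^(k+1) : ℝ) : ℂ) := by push_cast; ring
  rw [h1]
  have : q ^ (k+1) < 1 := pow_lt_one₀ hq.le hq1 (Nat.succ_ne_zero k)
  intro h
  rw [sub_eq_zero] at h
  have h2 : (1:ℝ) = q^(k+1) := by exact_mod_cast h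
  linarith

lemma qc_zero (a q : ℂ) : qc a q 0 = 1 := by simp [qc, qPochN]

lemma qc_rec {q : ℝ} (hq : 0 < q) (hq1 : q < 1) (a : ℂ) (n : ℕ) :
    qc a q (n+1) * (1 - (q:ℂ)^(n+1)) = qc a q n * (1 - a * (q:ℂ)^n) := by
  have h1 := qden_ne hq hq1 n
  have h2 := qden_ne hq hq1 (n+1)
  unfold qc qPochN at *
  rw [Finset.prod_range_succ, Finset.prod_range_succ]
  have h3 : (1:ℂ) - (q:ℂ) * (q:ℂ)^n = 1 - (q:ℂ)^(n+1) := by ring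
  rw [Finset.prod_range_succ] at h2
  have hfac : (1:ℂ) - (q:ℂ) * (q:ℂ)^n ≠ 0 := fun h => h2 (by rw [h, mul_zero])
  rw [h3] at hfac
  rw [← h3] at hfac ⊢
  field_simp
  rw [mul_div_assoc, div_self (by rwa [mul_comm] at hfac), mul_one]

lemma geomsum_le (q:ℝ) (hq:0<q)(hq1:q<1)(n:ℕ) : ∑ k ∈ Finset.range n, q ^ k ≤ (1 - q)⁻¹ := by
  have hpow : 0 ≤ q^n := by positivity
  have hne : q - 1 ≠ 0 := by intro h; nlinarith
  have hne2 : (1:ℝ) - q ≠ 0 := by intro h; nlinarith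
  have h := geom_sum_eq (by intro h; rw[h] at hq1; linarith : q ≠ 1) n
  have h2 : (q^n-1)/(q-1) = (1-q^n)/(1-q) := by
    rw [div_eq_div_iff hne hne2]; ring
  rw [h, h2, div_le_iff₀ (by linarith : (0:ℝ) < 1 - q), inv_mul_cancel₀ hne2]
  linarith

lemma qfac_bound {q : ℝ} (hq : 0 < q) (hq1 : q < 1) (a : ℂ) (k : ℕ) :
    ‖(1 - a * (q:ℂ)^k) / (1 - (q:ℂ) * (q:ℂ)^k)‖ ≤ Real.exp ((‖a‖ + q/(1-q)) * q^k) := by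
  have hqk : (0:ℝ) < q^k := pow_pos hq k
  have hqk1 : q^(k+1) < 1 := pow_lt_one₀ hq.le hq1 (Nat.succ_ne_zero k)
  have hqk1' : (0:ℝ) < q^(k+1) := pow_pos hq _
  have hden : (1:ℂ) - (q:ℂ) * (q:ℂ)^k = ((1 - q^(k+1) : ℝ) : ℂ) := by push_cast; ring
  rw [norm_div, hden, Complex.norm_real, Real.norm_eq_abs, abs_of_pos (by linarith)]
  have hnum : ‖(1:ℂ) - a * (q:ℂ)^k‖ ≤ 1 + ‖a‖ * q^k := by
    calc ‖(1:ℂ) - a * (q:ℂ)^k‖ ≤ ‖(1:ℂ)‖ + ‖a * (q:ℂ)^k‖ := norm_sub_le _ _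
    _ = 1 + ‖a‖ * q^k := by
        rw [norm_one, norm_mul, norm_pow, Complex.norm_real, Real.norm_eq_abs,
          abs_of_pos hq]
  have e1 : (1:ℝ) + ‖a‖ * q^k ≤ Real.exp (‖a‖ * q^k) := by
    have := Real.add_one_le_exp (‖a‖ * q^k); linarith
  have hd : (0:ℝ) < 1 - q^(k+1) := by linarith
  have hinv : 1 / (1 - q^(k+1)) ≤ Real.exp (q/(1-q) * q^k) := by
    have h2 : 1 / (1 - q^(k+1)) = 1 + q^(k+1)/(1 - q^(k+1)) := by
      field_simp
      ring
    have h3 : q^(k+1)/(1 - q^(k+1)) ≤ q^(k+1)/(1-q) := by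
      apply div_le_div_of_nonneg_left hqk1'.le (by linarith)
      have : q^(k+1) ≤ q := by
        calc q^(k+1) ≤ q^1 := pow_le_pow_of_le_one hq.le hq1.le (by omega)
        _ = q := pow_one q
      linarith
    have h4 : q^(k+1)/(1-q) = q/(1-q) * q^k := by rw [pow_succ]; ring
    have := Real.add_one_le_exp (q/(1-q) * q^k)
    rw [h2]; rw [h4] at h3; linarith
  calc ‖(1:ℂ) - a * (q:ℂ)^k‖ / (1 - q^(k+1))
      ≤ (1 + ‖a‖ * q^k) / (1 - q^(k+1)) := by gcongr
    _ = (1 + ‖a‖ * q^k) * (1/(1 - q^(k+1))) := by ring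
    _ ≤ Real.exp (‖a‖ * q^k) * Real.exp (q/(1-q) * q^k) :=
        mul_le_mul e1 hinv (one_div_nonneg.2 hd.le) (Real.exp_pos _).le
    _ = Real.exp ((‖a‖ + q/(1-q)) * q^k) := by rw [← Real.exp_add]; ring_nf

lemma qc_bound {q : ℝ} (hq : 0 < q) (hq1 : q < 1) (a : ℂ) (n : ℕ) :
    ‖qc a q n‖ ≤ Real.exp ((‖a‖ + q/(1-q)) / (1-q)) := by
  have h1q : (0:ℝ) < 1 - q := by linarith
  have hB : 0 ≤ ‖a‖ + q/(1-q) := add_nonneg (norm_nonneg a) (div_nonneg hq.le h1q.le)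
  have h1 : qc a q n = ∏ k ∈ Finset.range n, ((1 - a * (q:ℂ)^k) / (1 - (q:ℂ) * (q:ℂ)^k)) := by
    rw [qc, qPochN, qPochN, Finset.prod_div_distrib]
  rw [h1, norm_prod]
  calc ∏ k ∈ Finset.range n, ‖(1 - a * (q:ℂ)^k) / (1 - (q:ℂ) * (q:ℂ)^k)‖
      ≤ ∏ k ∈ Finset.range n, Real.exp ((‖a‖ + q/(1-q)) * q^k) := by
        apply Finset.prod_le_prod (fun k _ => norm_nonneg _)
        exact fun k _ => qfac_bound hq hq1 a k
    _ = Real.exp ((‖a‖ + q/(1-q)) * ∑ k ∈ Finset.range n, q^k) := by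
        rw [← Real.exp_sum, Finset.mul_sum]
    _ ≤ Real.exp ((‖a‖ + q/(1-q)) / (1-q)) := by
        apply Real.exp_le_exp.2
        rw [div_eq_mul_inv]
        apply mul_le_mul_of_nonneg_left _ hB
        exact geomsum_le q hq hq1 n

/-- the sum side -/
noncomputable def qF (a q : ℂ) (w : ℂ) : ℂ := ∑' n : ℕ, qc a q n * w^n

noncomputable def qC (a : ℂ) (q : ℝ) : ℝ := Real.exp ((‖a‖ + q/(1-q)) / (1-q))

lemma qC_pos (a : ℂ) (q : ℝ) : 0 < qC a q := Real.exp_pos _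

lemma qF_summable {q : ℝ} (hq : 0 < q) (hq1 : q < 1) (a w : ℂ) (hw : ‖w‖ < 1) :
    Summable (fun n => qc a (q:ℂ) n * w^n) := by
  apply Summable.of_norm_bounded (g := fun n => qC a q * ‖w‖^n)
    ((summable_geometric_of_lt_one (norm_nonneg w) hw).mul_left _)
  intro n
  rw [norm_mul, norm_pow]
  exact mul_le_mul_of_nonneg_right (qc_bound hq hq1 a n) (by positivity)

lemma qF_near_one {q : ℝ} (hq : 0 < q) (hq1 : q < 1) (a w : ℂ) (hw : ‖w‖ ≤ 1/2) :
    ‖qF a (q:ℂ) w - 1‖ ≤ 2 * qC a q * ‖w‖ := by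
  have hw1 : ‖w‖ < 1 := lt_of_le_of_lt hw (by norm_num)
  have hs := qF_summable hq hq1 a w hw1
  have h0 : qF a (q:ℂ) w = 1 + ∑' n : ℕ, qc a (q:ℂ) (n+1) * w^(n+1) := by
    rw [qF, Summable.tsum_eq_zero_add hs, qc_zero, pow_zero, mul_one]
  rw [h0, add_sub_cancel_left]
  have hgeom : HasSum (fun n : ℕ => (qC a q * ‖w‖) * (1/2)^n) ((qC a q * ‖w‖) * 2) := by
    have h := (hasSum_geometric_of_lt_one (by norm_num : (0:ℝ) ≤ 1/2)
      (by norm_num : (1:ℝ)/2 < 1)).mul_left (qC a q * ‖w‖)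
    have h2 : qC a q * ‖w‖ * (1 - 1/2 : ℝ)⁻¹ = qC a q * ‖w‖ * 2 := by norm_num
    rwa [h2] at h
  have hb : ∀ n : ℕ, ‖qc a (q:ℂ) (n+1) * w^(n+1)‖ ≤ (qC a q * ‖w‖) * (1/2)^n := by
    intro n
    rw [norm_mul, norm_pow, pow_succ]
    calc ‖qc a (q:ℂ) (n+1)‖ * (‖w‖^n * ‖w‖)
        ≤ qC a q * ((1/2)^n * ‖w‖) := by
          apply mul_le_mul (qc_bound hq hq1 a (n+1))
          · exact mul_le_mul_of_nonneg_right (pow_le_pow_left₀ (norm_nonneg w) hw n)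
              (norm_nonneg w)
          · positivity
          · exact (qC_pos a q).le
      _ = (qC a q * ‖w‖) * (1/2)^n := by ring
  calc ‖∑' n : ℕ, qc a (q:ℂ) (n+1) * w^(n+1)‖ ≤ (qC a q * ‖w‖) * 2 :=
        tsum_of_norm_bounded hgeom hb
    _ = 2 * qC a q * ‖w‖ := by ring

lemma qF_funceq {q : ℝ} (hq : 0 < q) (hq1 : q < 1) (a w : ℂ) (hw : ‖w‖ < 1) :
    (1 - w) * qF a (q:ℂ) w = (1 - a * w) * qF a (q:ℂ) ((q:ℂ) * w) := by
  have hqw : ‖(q:ℂ) * w‖ < 1 := by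
    rw [norm_mul, Complex.norm_real, Real.norm_eq_abs, abs_of_pos hq]
    calc q * ‖w‖ ≤ 1 * ‖w‖ := mul_le_mul_of_nonneg_right hq1.le (norm_nonneg w)
      _ = ‖w‖ := one_mul _
      _ < 1 := hw
  set c := fun n => qc a (q:ℂ) n with hc
  have hS1 : HasSum (fun n => c n * w^n) (qF a (q:ℂ) w) := (qF_summable hq hq1 a w hw).hasSum
  have hS2 : HasSum (fun n => c n * ((q:ℂ)*w)^n) (qF a (q:ℂ) ((q:ℂ)*w)) :=
    (qF_summable hq hq1 a _ hqw).hasSum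
  have h := (hS1.mul_left (1 - w)).sub (hS2.mul_left (1 - a*w))
  set hh := fun n => c n * (1 - (q:ℂ)^n) * w^n with hhh
  have key : ∀ n, (1-w) * (c n * w^n) - (1-a*w) * (c n * ((q:ℂ)*w)^n) = hh n - hh (n+1) := by
    intro n
    have hr := qc_rec hq hq1 a n
    simp only [hhh, hc, mul_pow]
    linear_combination (w^(n+1)) * hr
  have hzero : HasSum (fun n => (1-w) * (c n * w^n) - (1-a*w) * (c n * ((q:ℂ)*w)^n)) 0 := by
    have hsm : Summable (fun n => (1-w) * (c n * w^n) - (1-a*w) * (c n * ((q:ℂ)*w)^n)) :=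
      h.summable
    rw [Summable.hasSum_iff_tendsto_nat hsm]
    have hps : ∀ N, ∑ n ∈ Finset.range N, ((1-w) * (c n * w^n) - (1-a*w) * (c n * ((q:ℂ)*w)^n))
        = - hh N := by
      intro N
      rw [Finset.sum_congr rfl (fun n _ => key n), Finset.sum_range_sub']
      simp [hhh, qc_zero]
    simp only [hps]
    rw [← neg_zero]
    apply Tendsto.neg
    -- hh N → 0
    apply squeeze_zero_norm (a := fun N => (2 * qC a q) * ‖w‖^N)
    · intro N
      simp only [hhh, hc]
      rw [norm_mul, norm_mul, norm_pow]
      have h1 : ‖(1:ℂ) - (q:ℂ)^N‖ ≤ 2 := by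
        calc ‖(1:ℂ) - (q:ℂ)^N‖ ≤ ‖(1:ℂ)‖ + ‖(q:ℂ)^N‖ := norm_sub_le _ _
          _ ≤ 1 + 1 := by
            rw [norm_one, norm_pow, Complex.norm_real, Real.norm_eq_abs, abs_of_pos hq]
            have : q^N ≤ 1 := pow_le_one₀ hq.le hq1.le
            linarith
          _ = 2 := by norm_num
      calc ‖qc a (q:ℂ) N‖ * ‖(1:ℂ) - (q:ℂ)^N‖ * ‖w‖^N
          ≤ qC a q * 2 * ‖w‖^N := by
            apply mul_le_mul_of_nonneg_right _ (by positivity)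
            exact mul_le_mul (qc_bound hq hq1 a N) h1 (norm_nonneg _) (qC_pos a q).le
        _ = (2 * qC a q) * ‖w‖^N := by ring
    · rw [← mul_zero (2 * qC a q)]
      exact (tendsto_pow_atTop_nhds_zero_of_lt_one (norm_nonneg w) hw).const_mul _
  have h4 := h.unique hzero
  have := sub_eq_zero.mp h4
  linear_combination this

lemma qlog_summable {q : ℝ} (hq : 0 < q) (hq1 : q < 1) (b : ℂ) :
    Summable (fun k : ℕ => Complex.log (1 - b * (q:ℂ)^k)) := by
  have hgeo : Summable (fun k : ℕ => (3/2 * ‖b‖) * q^k) :=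
    (summable_geometric_of_lt_one hq.le hq1).mul_left _
  apply Summable.of_norm_bounded_eventually hgeo
  have hev : ∀ᶠ k in Filter.atTop, ‖b‖ * q^k ≤ 1/2 := by
    have ht : Filter.Tendsto (fun k : ℕ => ‖b‖ * q^k) Filter.atTop (nhds 0) := by
      rw [show (0:ℝ) = ‖b‖ * 0 by ring]
      exact (tendsto_pow_atTop_nhds_zero_of_lt_one hq.le hq1).const_mul _
    exact ht.eventually_le_const (by norm_num)
  rw [Nat.cofinite_eq_atTop]
  filter_upwards [hev] with k hk
  have hnb : ‖-(b * (q:ℂ)^k)‖ ≤ 1/2 := by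
    rw [norm_neg, norm_mul, norm_pow, Complex.norm_real, Real.norm_eq_abs, abs_of_pos hq]
    exact hk
  have := Complex.norm_log_one_add_half_le_self hnb
  rw [show (1:ℂ) + -(b * (q:ℂ)^k) = 1 - b * (q:ℂ)^k by ring] at this
  rw [norm_neg, norm_mul, norm_pow, Complex.norm_real, Real.norm_eq_abs, abs_of_pos hq] at this
  calc ‖Complex.log (1 - b * (q:ℂ)^k)‖ ≤ 3/2 * (‖b‖ * q^k) := this
    _ = 3/2 * ‖b‖ * q^k := by ring

lemma qpoch_multipliable {q : ℝ} (hq : 0 < q) (hq1 : q < 1) (b : ℂ)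
    (hb : ∀ k : ℕ, 1 - b * (q:ℂ)^k ≠ 0) :
    Multipliable (fun k : ℕ => 1 - b * (q:ℂ)^k) :=
  Complex.multipliable_of_summable_log (qlog_summable hq hq1 b)

lemma qpoch_tendsto {q : ℝ} (hq : 0 < q) (hq1 : q < 1) (b : ℂ) :
    Filter.Tendsto (fun n => ∏ k ∈ Finset.range n, (1 - b * (q:ℂ)^k)) Filter.atTop
      (nhds (qPochInf b (q:ℂ))) := by
  by_cases hb : ∀ k : ℕ, 1 - b * (q:ℂ)^k ≠ 0
  · exact (qpoch_multipliable hq hq1 b hb).hasProd.tendsto_prod_nat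
  · push_neg at hb
    obtain ⟨k0, hk0⟩ := hb
    have hzero : qPochInf b (q:ℂ) = 0 := by
      have hp : HasProd (fun k : ℕ => 1 - b * (q:ℂ)^k) 0 := by
        rw [HasProd]
        apply Filter.Tendsto.congr' _ tendsto_const_nhds
        filter_upwards [Filter.eventually_ge_atTop ({k0} : Finset ℕ)] with s hs
        exact (Finset.prod_eq_zero (Finset.singleton_subset_iff.mp hs) hk0).symm
      rw [qPochInf]
      exact hp.tprod_eq
    rw [hzero]
    apply Filter.Tendsto.congr' _ tendsto_const_nhds
    filter_upwards [Filter.eventually_ge_atTop (k0+1)] with n hn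
    exact (Finset.prod_eq_zero (Finset.mem_range.mpr (by omega)) hk0).symm

lemma qpochinf_ne_zero {q : ℝ} (hq : 0 < q) (hq1 : q < 1) (b : ℂ)
    (hb : ∀ k : ℕ, 1 - b * (q:ℂ)^k ≠ 0) : qPochInf b (q:ℂ) ≠ 0 := by
  have h : cexp (∑' k : ℕ, Complex.log (1 - b * (q:ℂ)^k)) = ∏' k : ℕ, (1 - b * (q:ℂ)^k) :=
    Complex.cexp_tsum_eq_tprod hb (qlog_summable hq hq1 b)
  rw [qPochInf, ← h]
  exact Complex.exp_ne_zero _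

lemma qF_iter {q : ℝ} (hq : 0 < q) (hq1 : q < 1) (a z : ℂ) (hz : ‖z‖ < 1) (n : ℕ) :
    (∏ k ∈ Finset.range n, (1 - z * (q:ℂ)^k)) * qF a (q:ℂ) z
      = (∏ k ∈ Finset.range n, (1 - a * z * (q:ℂ)^k)) * qF a (q:ℂ) ((q:ℂ)^n * z) := by
  induction n with
  | zero => simp
  | succ n ih =>
    have hw : ‖(q:ℂ)^n * z‖ < 1 := by
      rw [norm_mul, norm_pow, Complex.norm_real, Real.norm_eq_abs, abs_of_pos hq]
      calc q^n * ‖z‖ ≤ 1 * ‖z‖ :=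
            mul_le_mul_of_nonneg_right (pow_le_one₀ hq.le hq1.le) (norm_nonneg z)
        _ = ‖z‖ := one_mul _
        _ < 1 := hz
    have hfe := qF_funceq hq hq1 a ((q:ℂ)^n * z) hw
    rw [show (q:ℂ) * ((q:ℂ)^n * z) = (q:ℂ)^(n+1) * z by ring] at hfe
    rw [Finset.prod_range_succ, Finset.prod_range_succ]
    linear_combination (1 - z * (q:ℂ)^n) * ih
      + (∏ k ∈ Finset.range n, (1 - a * z * (q:ℂ)^k)) * hfe

theorem q_binomial_theorem (q : ℝ) (a z : ℂ)
    (hq : 0 < q) (hq1 : q < 1) (hz : ‖z‖ < 1) :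
    ∑' n : ℕ, qPochN a (q : ℂ) n / qPochN (q : ℂ) (q : ℂ) n * z ^ n =
      qPochInf (a * z) (q : ℂ) / qPochInf z (q : ℂ) := by
  have hz' : ‖z‖ < 1 := hz
  have hbz : ∀ k : ℕ, 1 - z * (q:ℂ)^k ≠ 0 := by
    intro k h
    rw [sub_eq_zero] at h
    have : ‖z * (q:ℂ)^k‖ < 1 := by
      rw [norm_mul, norm_pow, Complex.norm_real, Real.norm_eq_abs, abs_of_pos hq]
      calc ‖z‖ * q^k ≤ ‖z‖ * 1 :=
            mul_le_mul_of_nonneg_left (pow_le_one₀ hq.le hq1.le) (norm_nonneg z)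
        _ = ‖z‖ := mul_one _
        _ < 1 := hz'
    rw [← h] at this
    simp at this
  have hLHS : (∑' n : ℕ, qPochN a (q : ℂ) n / qPochN (q : ℂ) (q : ℂ) n * z ^ n)
      = qF a (q:ℂ) z := rfl
  rw [hLHS]
  -- limit of LHS of iteration
  have h1 : Filter.Tendsto (fun n => (∏ k ∈ Finset.range n, (1 - z * (q:ℂ)^k)) * qF a (q:ℂ) z)
      Filter.atTop (nhds (qPochInf z (q:ℂ) * qF a (q:ℂ) z)) :=
    (qpoch_tendsto hq hq1 z).mul_const _
  -- qF a q (q^n z) → 1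
  have hnorm : ∀ n : ℕ, ‖(q:ℂ)^n * z‖ = q^n * ‖z‖ := by
    intro n
    rw [norm_mul, norm_pow, Complex.norm_real, Real.norm_eq_abs, abs_of_pos hq]
  have hton : Filter.Tendsto (fun n : ℕ => q^n * ‖z‖) Filter.atTop (nhds 0) := by
    rw [show (0:ℝ) = 0 * ‖z‖ by ring]
    exact (tendsto_pow_atTop_nhds_zero_of_lt_one hq.le hq1).mul_const _
  have hF1 : Filter.Tendsto (fun n : ℕ => qF a (q:ℂ) ((q:ℂ)^n * z)) Filter.atTop (nhds 1) := by
    have hd : Filter.Tendsto (fun n : ℕ => qF a (q:ℂ) ((q:ℂ)^n * z) - 1) Filter.atTop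
        (nhds 0) := by
      apply squeeze_zero_norm' (a := fun n : ℕ => 2 * qC a q * (q^n * ‖z‖))
      · have hev : ∀ᶠ n : ℕ in Filter.atTop, q^n * ‖z‖ ≤ 1/2 :=
          hton.eventually_le_const (by norm_num)
        filter_upwards [hev] with n hn
        have := qF_near_one hq hq1 a ((q:ℂ)^n * z) (by rw [hnorm n]; exact hn)
        rw [hnorm n] at this
        exact this
      · rw [show (0:ℝ) = 2 * qC a q * 0 by ring]
        exact hton.const_mul _
    have := hd.add_const 1
    simpa using this
  have h2 : Filter.Tendsto
      (fun n => (∏ k ∈ Finset.range n, (1 - a * z * (q:ℂ)^k)) * qF a (q:ℂ) ((q:ℂ)^n * z))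
      Filter.atTop (nhds (qPochInf (a*z) (q:ℂ) * 1)) :=
    (qpoch_tendsto hq hq1 (a*z)).mul hF1
  have h3 : qPochInf z (q:ℂ) * qF a (q:ℂ) z = qPochInf (a*z) (q:ℂ) * 1 := by
    apply tendsto_nhds_unique _ h2
    apply h1.congr
    intro n
    exact qF_iter hq hq1 a z hz' n
  rw [mul_one] at h3
  rw [eq_div_iff (qpochinf_ne_zero hq hq1 z hbz)]
  linear_combination h3
end

section
/- For 0 < q < 1 and nonzero complex α, β, w with α β² = −1, one has 1 / [ θ_{q²}(αβ/(q^{1/2} w)) · θ_{q²}(αβ w / q^{1/2}) ] = 2 / [ θ_q(αβ/q^{1/2}) θ_q(w/(αβ²)) + θ_q(w) θ_q(1/(β q^{1/2})) ], provided the denominators are nonzero. -/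
open Complex

/-- Jacobi theta function `θ_q(z) = Σ_{n ∈ ℤ} q^(n²/2) (−z)^n`. -/
noncomputable def jacobiTheta' (q : ℝ) (z : ℂ) : ℂ :=
  ∑' n : ℤ, ((q ^ (((n : ℝ) ^ 2) / 2) : ℝ) : ℂ) * (-z) ^ n

/-- Summability of the nat-indexed theta-type series. -/
lemma theta_sumNat {q : ℝ} (hq : 0 < q) (hq1 : q < 1) {r : ℝ} (hr : 0 < r) :
    Summable (fun n : ℕ => q ^ (((n : ℝ) ^ 2) / 2) * r ^ n) := by
  have htend : Filter.Tendsto (fun n : ℕ => q ^ ((n : ℝ) + 1/2) * r) Filter.atTop (nhds 0) := by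
    have h1 : Filter.Tendsto (fun n : ℕ => q ^ n) Filter.atTop (nhds 0) :=
      tendsto_pow_atTop_nhds_zero_of_lt_one hq.le hq1
    have heq : (fun n : ℕ => q ^ ((n : ℝ) + 1/2) * r)
        = fun n : ℕ => q ^ n * (q ^ (1/2 : ℝ) * r) := by
      funext n
      rw [Real.rpow_add hq, Real.rpow_natCast]; ring
    rw [heq]
    simpa using h1.mul_const (q ^ (1/2 : ℝ) * r)
  apply summable_of_ratio_norm_eventually_le (r := 1/2) (by norm_num)
  filter_upwards [htend.eventually (gt_mem_nhds (by norm_num : (0:ℝ) < 1/2))] with n hn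
  have h1 : q ^ ((((n+1 : ℕ)) : ℝ) ^ 2 / 2) * r ^ (n+1)
      = (q ^ ((n : ℝ) ^ 2 / 2) * r ^ n) * (q ^ ((n : ℝ) + 1/2) * r) := by
    rw [show (((n+1 : ℕ)) : ℝ) ^ 2 / 2 = (n : ℝ) ^ 2 / 2 + ((n : ℝ) + 1/2) by push_cast; ring,
      Real.rpow_add hq, pow_succ]
    ring
  rw [Real.norm_eq_abs, Real.norm_eq_abs, h1, abs_of_pos (by positivity),
    abs_of_pos (by positivity), mul_comm (1/2 : ℝ)]
  exact mul_le_mul_of_nonneg_left hn.le (by positivity)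

/-- Norm-summability of the theta series terms. -/
lemma theta_norm_summable {q : ℝ} (hq : 0 < q) (hq1 : q < 1) {z : ℂ} (hz : z ≠ 0) :
    Summable (fun n : ℤ => ‖((q ^ (((n : ℝ) ^ 2) / 2) : ℝ) : ℂ) * (-z) ^ n‖) := by
  have hz' : (0:ℝ) < ‖z‖ := norm_pos_iff.mpr hz
  have hfun : (fun n : ℤ => ‖((q ^ (((n : ℝ) ^ 2) / 2) : ℝ) : ℂ) * (-z) ^ n‖)
      = fun n : ℤ => q ^ (((n : ℝ) ^ 2) / 2) * ‖z‖ ^ n := by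
    funext n
    rw [norm_mul, norm_zpow, norm_neg, Complex.norm_real, Real.norm_eq_abs,
      abs_of_pos (Real.rpow_pos_of_pos hq _)]
  rw [hfun]
  apply Summable.of_nat_of_neg
  · have := theta_sumNat hq hq1 hz'
    refine this.congr fun n => ?_
    push_cast
    rw [zpow_natCast]
  · have := theta_sumNat hq hq1 (inv_pos.mpr hz')
    refine this.congr fun n => ?_
    push_cast
    rw [zpow_neg, zpow_natCast, inv_pow]
    ring_nf

lemma theta_summable {q : ℝ} (hq : 0 < q) (hq1 : q < 1) {z : ℂ} (hz : z ≠ 0) :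
    Summable (fun n : ℤ => ((q ^ (((n : ℝ) ^ 2) / 2) : ℝ) : ℂ) * (-z) ^ n) :=
  (theta_norm_summable hq hq1 hz).of_norm

lemma eps_sq (n : ℤ) : ((-1 : ℂ)) ^ n * (-1 : ℂ) ^ n = 1 := by
  rw [← zpow_add₀ (by norm_num : (-1:ℂ) ≠ 0), show n + n = 2 * n by ring, zpow_mul]
  norm_num

/-- The key theta identity. -/
lemma theta_key {q : ℝ} (hq : 0 < q) (hq1 : q < 1) {x y : ℂ} (hx : x ≠ 0) (hy : y ≠ 0) :
    jacobiTheta' q x * jacobiTheta' q (-y) + jacobiTheta' q y * jacobiTheta' q (-x)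
      = 2 * (jacobiTheta' (q^2) (x/y) * jacobiTheta' (q^2) (x*y)) := by
  have hq2 : 0 < q ^ 2 := by positivity
  have hq21 : q ^ 2 < 1 := by nlinarith
  have hxy : x * y ≠ 0 := mul_ne_zero hx hy
  have hxdy : x / y ≠ 0 := div_ne_zero hx hy
  have Sx := theta_norm_summable hq hq1 hx
  have Sy := theta_norm_summable hq hq1 hy
  have Snx := theta_norm_summable hq hq1 (neg_ne_zero.mpr hx)
  have Sny := theta_norm_summable hq hq1 (neg_ne_zero.mpr hy)
  have Sxy := theta_norm_summable hq2 hq21 hxy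
  have Sxdy := theta_norm_summable hq2 hq21 hxdy
  -- express products as double sums
  rw [jacobiTheta', jacobiTheta', jacobiTheta', jacobiTheta', jacobiTheta', jacobiTheta']
  rw [tsum_mul_tsum_of_summable_norm Sx Sny,
    show (∑' n : ℤ, ((q ^ (((n : ℝ) ^ 2) / 2) : ℝ) : ℂ) * (-y) ^ n) *
        (∑' n : ℤ, ((q ^ (((n : ℝ) ^ 2) / 2) : ℝ) : ℂ) * (- -x) ^ n)
      = (∑' n : ℤ, ((q ^ (((n : ℝ) ^ 2) / 2) : ℝ) : ℂ) * (- -x) ^ n) *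
        (∑' n : ℤ, ((q ^ (((n : ℝ) ^ 2) / 2) : ℝ) : ℂ) * (-y) ^ n) from mul_comm _ _,
    tsum_mul_tsum_of_summable_norm Snx Sy,
    tsum_mul_tsum_of_summable_norm Sxdy Sxy,
    ← Summable.tsum_add (summable_mul_of_summable_norm Sx Sny) (summable_mul_of_summable_norm Snx Sy),
    ← tsum_mul_left]
  -- reindex
  set L : ℤ × ℤ → ℂ := fun p =>
    ((q ^ (((p.1 : ℝ) ^ 2) / 2) : ℝ) : ℂ) * (-x) ^ p.1 *
      (((q ^ (((p.2 : ℝ) ^ 2) / 2) : ℝ) : ℂ) * (- -y) ^ p.2) +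
    ((q ^ (((p.1 : ℝ) ^ 2) / 2) : ℝ) : ℂ) * (- -x) ^ p.1 *
      (((q ^ (((p.2 : ℝ) ^ 2) / 2) : ℝ) : ℂ) * (-y) ^ p.2) with hL
  show ∑' p : ℤ × ℤ, L p = _
  have hinj : Function.Injective (fun p : ℤ × ℤ => (p.2 + p.1, p.2 - p.1)) := by
    rintro ⟨a, b⟩ ⟨c, d⟩ h
    simp only [Prod.mk.injEq] at h ⊢
    omega
  have hsupp : Function.support L ⊆ Set.range (fun p : ℤ × ℤ => (p.2 + p.1, p.2 - p.1)) := by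
    rw [Function.support_subset_iff']
    rintro ⟨m, n⟩ hmn
    rcases Int.even_or_odd (m + n) with he | ho
    · exfalso
      apply hmn
      obtain ⟨k, hk⟩ := he
      exact ⟨((m - n) / 2, (m + n) / 2), by simp only [Prod.mk.injEq]; omega⟩
    · have h1 : (-1 : ℂ) ^ m * ((-1 : ℂ) ^ n) = -1 := by
        rw [← zpow_add₀ (by norm_num : (-1:ℂ) ≠ 0)]
        exact ho.neg_one_zpow
      have h2 := eps_sq m
      simp only [hL, neg_neg]
      have hx' : (-x) ^ m = (-1 : ℂ) ^ m * x ^ m := by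
        rw [show -x = (-1 : ℂ) * x by ring, mul_zpow]
      have hy' : (-y) ^ n = (-1 : ℂ) ^ n * y ^ n := by
        rw [show -y = (-1 : ℂ) * y by ring, mul_zpow]
      rw [hx', hy']
      set Em := (-1 : ℂ) ^ m
      set En := (-1 : ℂ) ^ n
      have : Em + En = 0 := by linear_combination Em * h1 - En * h2
      linear_combination (((q ^ (((m : ℝ) ^ 2) / 2) : ℝ) : ℂ) *
        (((q ^ (((n : ℝ) ^ 2) / 2) : ℝ) : ℂ)) * x ^ m * y ^ n) * this
  rw [← Function.Injective.tsum_eq hinj hsupp]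
  congr 1
  funext p
  obtain ⟨s, r⟩ := p
  simp only [hL, neg_neg]
  push_cast
  -- real coefficient identity
  have creal : ((q ^ ((((r : ℝ) + (s : ℝ))) ^ 2 / 2) : ℝ)) * (q ^ ((((r : ℝ) - (s : ℝ))) ^ 2 / 2) : ℝ)
      = ((q ^ 2) ^ (((s : ℝ)) ^ 2 / 2)) * ((q ^ 2) ^ (((r : ℝ)) ^ 2 / 2)) := by
    rw [Real.rpow_def_of_pos hq, Real.rpow_def_of_pos hq, Real.rpow_def_of_pos hq2,
      Real.rpow_def_of_pos hq2, ← Real.exp_add, ← Real.exp_add, Real.log_pow]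
    congr 1
    push_cast
    ring
  -- complex monomial identity
  have hx' : ∀ k : ℤ, (-x) ^ k = (-1 : ℂ) ^ k * x ^ k := fun k => by
    rw [show -x = (-1 : ℂ) * x by ring, mul_zpow]
  have hy' : ∀ k : ℤ, (-y) ^ k = (-1 : ℂ) ^ k * y ^ k := fun k => by
    rw [show -y = (-1 : ℂ) * y by ring, mul_zpow]
  have hxy' : (-(x * y)) ^ r = (-1 : ℂ) ^ r * (x ^ r * y ^ r) := by
    rw [show -(x * y) = (-1 : ℂ) * (x * y) by ring, mul_zpow, mul_zpow]
  have hxdy' : (-(x / y)) ^ s = (-1 : ℂ) ^ s * (x ^ s / y ^ s) := by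
    rw [show -(x / y) = (-1 : ℂ) * (x / y) by ring, mul_zpow, div_zpow]
  rw [hx' (r + s), hy' (r - s), hxy', hxdy',
    zpow_add₀ hx, zpow_sub₀ hy, zpow_add₀ (by norm_num : (-1:ℂ) ≠ 0),
    zpow_sub₀ (by norm_num : (-1:ℂ) ≠ 0)]
  have hinv : ((-1 : ℂ) ^ s)⁻¹ = (-1 : ℂ) ^ s := by
    rw [inv_eq_of_mul_eq_one_right (eps_sq s)]
  have hys : y ^ s ≠ 0 := zpow_ne_zero s hy
  have hcast : (((q ^ ((((r : ℝ) + (s : ℝ))) ^ 2 / 2) : ℝ)) : ℂ) *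
      (((q ^ ((((r : ℝ) - (s : ℝ))) ^ 2 / 2) : ℝ)) : ℂ)
      = (((q ^ 2) ^ (((s : ℝ)) ^ 2 / 2) : ℝ) : ℂ) * (((q ^ 2) ^ (((r : ℝ)) ^ 2 / 2) : ℝ) : ℂ) := by
    rw [← Complex.ofReal_mul, ← Complex.ofReal_mul, creal]
  rw [div_eq_mul_inv ((-1:ℂ)^r), hinv]
  field_simp
  linear_combination 2 * hcast +
    (((q ^ ((((r : ℝ) + (s : ℝ))) ^ 2 / 2) : ℝ) : ℂ) *
      (((q ^ ((((r : ℝ) - (s : ℝ))) ^ 2 / 2) : ℝ)) : ℂ) * x ^ r * x ^ s * y ^ r *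
      (-1:ℂ) ^ r) * eps_sq s - ((((q ^ ((((r : ℝ) + (s : ℝ))) ^ 2 / 2) : ℝ) : ℂ)) *
      (((q ^ ((((r : ℝ) - (s : ℝ))) ^ 2 / 2) : ℝ)) : ℂ) * x ^ r * x ^ s * y ^ r *
      (-1:ℂ) ^ r) * eps_sq s

theorem theta_sum_formula (q : ℝ) (α β w : ℂ)
    (hq : 0 < q) (hq1 : q < 1) (hα : α ≠ 0) (hβ : β ≠ 0) (hw : w ≠ 0)
    (hc : α * β ^ 2 = -1)
    (hd1 : jacobiTheta' (q ^ 2) (α * β / ((Real.sqrt q : ℂ) * w)) *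
            jacobiTheta' (q ^ 2) (α * β * w / (Real.sqrt q : ℂ)) ≠ 0)
    (hd2 : jacobiTheta' q (α * β / (Real.sqrt q : ℂ)) * jacobiTheta' q (w / (α * β ^ 2)) +
            jacobiTheta' q w * jacobiTheta' q (1 / (β * (Real.sqrt q : ℂ))) ≠ 0) :
    1 / (jacobiTheta' (q ^ 2) (α * β / ((Real.sqrt q : ℂ) * w)) *
          jacobiTheta' (q ^ 2) (α * β * w / (Real.sqrt q : ℂ))) =
      2 / (jacobiTheta' q (α * β / (Real.sqrt q : ℂ)) * jacobiTheta' q (w / (α * β ^ 2)) +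
            jacobiTheta' q w * jacobiTheta' q (1 / (β * (Real.sqrt q : ℂ)))) := by
  have hsq : (Real.sqrt q : ℂ) ≠ 0 := by
    simp only [ne_eq, Complex.ofReal_eq_zero]
    exact (Real.sqrt_pos.mpr hq).ne'
  set x : ℂ := α * β / (Real.sqrt q : ℂ) with hxdef
  have hx : x ≠ 0 := div_ne_zero (mul_ne_zero hα hβ) hsq
  have e1 : α * β / ((Real.sqrt q : ℂ) * w) = x / w := by
    rw [hxdef]; field_simp
  have e2 : α * β * w / (Real.sqrt q : ℂ) = x * w := by
    rw [hxdef]; field_simp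
  have e3 : w / (α * β ^ 2) = -w := by
    rw [hc]; field_simp
  have e4 : (1 : ℂ) / (β * (Real.sqrt q : ℂ)) = -x := by
    rw [hxdef]
    rw [div_eq_iff (mul_ne_zero hβ hsq)]
    field_simp
    linear_combination hc
  rw [e1, e2, e3, e4] at *
  have hkey := theta_key hq hq1 hx hw
  rw [hkey]
  by_cases h : jacobiTheta' (q ^ 2) (x / w) * jacobiTheta' (q ^ 2) (x * w) = 0
  · rw [h]; simp
  · field_simp
end

section
/- For 0 < q < 1 and nonzero complex α, β, w with α β² = −1, one has 1 / [ θ_{q²}(q · αβ/(q^{1/2} w)) · θ_{q²}(q · αβ w / q^{1/2}) ] = 2αβ / [ −θ_q(αβ/q^{1/2}) θ_q(w/(αβ²)) + θ_q(w) θ_q(1/(β q^{1/2})) ], provided the denominators are nonzero. -/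
open Complex

open Filter in
private lemma summable_norm_theta_term (q : ℝ) (hq : 0 < q) (hq1 : q < 1) (z : ℂ) (hz : z ≠ 0) :
    Summable (fun n : ℤ => ‖((q ^ (((n : ℝ) ^ 2) / 2) : ℝ) : ℂ) * (-z) ^ n‖) := by
  have key : ∀ c : ℝ, 0 < c → Summable (fun n : ℕ => q ^ (((n : ℝ) ^ 2) / 2) * c ^ n) := by
    intro c hc
    apply summable_of_ratio_norm_eventually_le (r := 2⁻¹) (by norm_num)
    have h0 : Tendsto (fun n : ℕ => q ^ n * (q ^ (2⁻¹ : ℝ) * c)) atTop (nhds 0) := by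
      simpa using (tendsto_pow_atTop_nhds_zero_of_lt_one hq.le hq1).mul_const (q ^ (2⁻¹:ℝ) * c)
    have h1 : ∀ᶠ n : ℕ in atTop, q ^ n * (q ^ (2⁻¹ : ℝ) * c) ≤ 2⁻¹ :=
      h0.eventually_le_const (by norm_num)
    filter_upwards [h1] with n hn
    have hpos : (0:ℝ) ≤ q ^ (((n : ℝ) ^ 2) / 2) * c ^ n :=
      mul_nonneg (Real.rpow_nonneg hq.le _) (pow_nonneg hc.le _)
    rw [Real.norm_of_nonneg (mul_nonneg (Real.rpow_nonneg hq.le _) (pow_nonneg hc.le _)),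
      Real.norm_of_nonneg hpos]
    have hsplit : q ^ ((((n:ℕ)+1 : ℝ) ^ 2) / 2)
        = q ^ (((n : ℝ) ^ 2) / 2) * (q ^ (n:ℕ) * q ^ (2⁻¹:ℝ)) := by
      rw [← Real.rpow_natCast q n, ← Real.rpow_add hq, ← Real.rpow_add hq]
      congr 1; push_cast; ring
    push_cast
    rw [hsplit]
    calc q ^ (((n:ℝ)^2)/2) * (q ^ (n:ℕ) * q ^ (2⁻¹:ℝ)) * c ^ (n+1)
        = (q ^ (n:ℕ) * (q ^ (2⁻¹:ℝ) * c)) * (q ^ (((n:ℝ)^2)/2) * c ^ n) := by ring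
      _ ≤ 2⁻¹ * (q ^ (((n:ℝ)^2)/2) * c ^ n) := by
          apply mul_le_mul_of_nonneg_right hn hpos
  have heq : ∀ n : ℤ, ‖((q ^ (((n : ℝ) ^ 2) / 2) : ℝ) : ℂ) * (-z) ^ n‖
      = q ^ (((n : ℝ) ^ 2) / 2) * ‖z‖ ^ n := by
    intro n
    rw [norm_mul, Complex.norm_real, norm_zpow, norm_neg,
      Real.norm_of_nonneg (Real.rpow_nonneg hq.le _)]
  apply Summable.congr _ (fun n => (heq n).symm)
  have hz' : 0 < ‖z‖ := norm_pos_iff.mpr hz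
  apply Summable.of_nat_of_neg
  · apply ((key ‖z‖ hz').congr (fun n => ?_))
    rw [zpow_natCast]
    norm_num
  · apply ((key ‖z‖⁻¹ (by positivity)).congr (fun n => ?_))
    push_cast
    rw [zpow_neg, ← inv_zpow, zpow_natCast]
    congr 2
    ring

private lemma cast_zpow_eq (q : ℝ) (k : ℤ) :
    ((q : ℂ)) ^ k = ((q ^ ((k : ℝ)) : ℝ) : ℂ) := by
  rw [Real.rpow_intCast, Complex.ofReal_zpow]

private lemma cast_rpow_mul (q : ℝ) (hq : 0 < q) (a b : ℝ) :
    ((q ^ a : ℝ) : ℂ) * ((q ^ b : ℝ) : ℂ) = ((q ^ (a + b) : ℝ) : ℂ) := by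
  rw [← Complex.ofReal_mul, ← Real.rpow_add hq]

private lemma cast_sq_rpow (q : ℝ) (hq : 0 < q) (a : ℝ) :
    (((q ^ 2 : ℝ) ^ a : ℝ) : ℂ) = ((q ^ (2 * a) : ℝ) : ℂ) := by
  congr 1
  rw [← Real.rpow_natCast q 2, ← Real.rpow_mul hq.le]
  norm_num

private lemma theta_inv (q : ℝ) (z : ℂ) : jacobiTheta' q z⁻¹ = jacobiTheta' q z := by
  unfold jacobiTheta'
  rw [← (Equiv.neg ℤ).tsum_eq (fun n : ℤ => ((q ^ (((n : ℝ) ^ 2) / 2) : ℝ) : ℂ) * (-z) ^ n)]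
  apply tsum_congr
  intro n
  simp only [Equiv.neg_apply]
  rw [show (-z⁻¹) = (-z)⁻¹ by ring, inv_zpow, ← zpow_neg]
  congr 3
  push_cast
  ring

private lemma theta_qmul (Q : ℝ) (hQ : 0 < Q) (z : ℂ) (hz : z ≠ 0) :
    jacobiTheta' Q ((Q : ℂ) * z) = -((Real.sqrt Q : ℝ) : ℂ)⁻¹ * z⁻¹ * jacobiTheta' Q z := by
  unfold jacobiTheta'
  rw [← (Equiv.addRight (1:ℤ)).tsum_eq
      (fun n : ℤ => ((Q ^ (((n : ℝ) ^ 2) / 2) : ℝ) : ℂ) * (-z) ^ n),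
    ← tsum_mul_left]
  apply tsum_congr
  intro n
  simp only [Equiv.coe_addRight]
  have hQ0 : (Q : ℂ) ≠ 0 := by exact_mod_cast hQ.ne'
  have hz' : (-z) ≠ 0 := neg_ne_zero.mpr hz
  have hsq : ((Real.sqrt Q : ℝ) : ℂ)⁻¹ = ((Q ^ (-(2⁻¹) : ℝ) : ℝ) : ℂ) := by
    rw [Real.sqrt_eq_rpow, ← Complex.ofReal_inv, ← Real.rpow_neg hQ.le]
    norm_num
  rw [show (-((Q:ℂ) * z)) = (Q:ℂ) * (-z) by ring, mul_zpow, cast_zpow_eq Q n, hsq]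
  have h1 : (-z) ^ (n + 1) = (-z) ^ n * (-z) := by
    rw [zpow_add₀ hz', zpow_one]
  rw [h1]
  have h2 : (-((Q ^ (-(2⁻¹) : ℝ) : ℝ) : ℂ)) * z⁻¹ *
      (((Q ^ ((((n:ℤ)+1 : ℝ)) ^ 2 / 2) : ℝ) : ℂ) * ((-z) ^ n * -z))
      = (((Q ^ (-(2⁻¹) : ℝ) : ℝ) : ℂ) * ((Q ^ ((((n:ℤ)+1 : ℝ)) ^ 2 / 2) : ℝ) : ℂ))
        * ((-z) ^ n * (z * z⁻¹)) := by
    ring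
  push_cast at h2 ⊢
  rw [h2, mul_inv_cancel₀ hz, mul_one, cast_rpow_mul Q hQ, ← mul_assoc, cast_rpow_mul Q hQ]
  congr 2
  push_cast
  ring

private lemma theta_prod_diff (q : ℝ) (hq : 0 < q) (hq1 : q < 1) (x y : ℂ)
    (hx : x ≠ 0) (hy : y ≠ 0) :
    jacobiTheta' q x * jacobiTheta' q y - jacobiTheta' q (-x) * jacobiTheta' q (-y)
      = -2 * x * ((Real.sqrt q : ℝ) : ℂ) *
        (jacobiTheta' (q ^ 2) (-((q : ℂ) * x * y)) *
          jacobiTheta' (q ^ 2) (-((q : ℂ) * x / y))) := by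
  have hq2 : 0 < q ^ 2 := by positivity
  have hq21 : q ^ 2 < 1 := by nlinarith
  have hqC : (q : ℂ) ≠ 0 := by exact_mod_cast hq.ne'
  have h1 := summable_norm_theta_term q hq hq1 x hx
  have h2 := summable_norm_theta_term q hq hq1 y hy
  have h3 := summable_norm_theta_term q hq hq1 (-x) (neg_ne_zero.mpr hx)
  have h4 := summable_norm_theta_term q hq hq1 (-y) (neg_ne_zero.mpr hy)
  have h5 := summable_norm_theta_term (q ^ 2) hq2 hq21 (-((q : ℂ) * x * y))
    (by simp [hqC, hx, hy])
  have h6 := summable_norm_theta_term (q ^ 2) hq2 hq21 (-((q : ℂ) * x / y))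
    (by simp [hqC, hx, hy])
  unfold jacobiTheta'
  rw [tsum_mul_tsum_of_summable_norm h1 h2, tsum_mul_tsum_of_summable_norm h3 h4,
    tsum_mul_tsum_of_summable_norm h5 h6,
    ← (summable_mul_of_summable_norm h1 h2).tsum_sub (summable_mul_of_summable_norm h3 h4),
    ← tsum_mul_left]
  have hinj : Function.Injective
      (fun rs : ℤ × ℤ => ((rs.1 + rs.2 + 1, rs.1 - rs.2) : ℤ × ℤ)) := by
    intro a b h
    have h1 := congrArg Prod.fst h
    have h2 := congrArg Prod.snd h
    simp only at h1 h2
    ext <;> omega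
  rw [← Function.Injective.tsum_eq hinj ?_]
  · apply tsum_congr
    intro rs
    obtain ⟨r, s⟩ := rs
    simp only [neg_neg]
    have e1 : (-x) ^ (r + s + 1) = (-1 : ℂ) ^ (r + s + 1) * x ^ (r + s + 1) := by
      rw [show (-x) = (-1 : ℂ) * x by ring, mul_zpow]
    have e2 : (-y) ^ (r - s) = (-1 : ℂ) ^ (r - s) * y ^ (r - s) := by
      rw [show (-y) = (-1 : ℂ) * y by ring, mul_zpow]
    have hsign : ((-1 : ℂ)) ^ (r + s + 1) * (-1 : ℂ) ^ (r - s) = -1 := by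
      rw [← zpow_add₀ (by norm_num : (-1 : ℂ) ≠ 0)]
      exact Odd.neg_one_zpow ⟨r, by ring⟩
    set Em : ℝ := (((r + s + 1 : ℤ) : ℝ)) ^ 2 / 2 with hEm
    set En : ℝ := (((r - s : ℤ) : ℝ)) ^ 2 / 2 with hEn
    trans (-2 : ℂ) * ((q ^ (Em + En) : ℝ) : ℂ) * (x ^ (r + s + 1) * y ^ (r - s))
    · rw [e1, e2, ← cast_rpow_mul q hq Em En]
      linear_combination (((q ^ Em : ℝ) : ℂ) * ((q ^ En : ℝ) : ℂ)
        * x ^ (r + s + 1) * y ^ (r - s)) * hsign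
    · have c1 : ((Real.sqrt q : ℝ) : ℂ) = ((q ^ (2⁻¹ : ℝ) : ℝ) : ℂ) := by
        rw [Real.sqrt_eq_rpow]
        norm_num
      rw [c1, cast_sq_rpow q hq ((r : ℝ) ^ 2 / 2), cast_sq_rpow q hq ((s : ℝ) ^ 2 / 2)]
      rw [show ((q : ℂ) * x * y) ^ r = (q : ℂ) ^ r * x ^ r * y ^ r by
            rw [mul_zpow, mul_zpow],
        show ((q : ℂ) * x / y) ^ s = (q : ℂ) ^ s * x ^ s / y ^ s by
            rw [div_zpow, mul_zpow],
        cast_zpow_eq q r, cast_zpow_eq q s,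
        show x ^ (r + s + 1) = x ^ r * x ^ s * x by
            rw [zpow_add₀ hx, zpow_add₀ hx, zpow_one],
        show y ^ (r - s) = y ^ r / y ^ s by rw [zpow_sub₀ hy]]
      have hm : ((q ^ (Em + En) : ℝ) : ℂ) =
          ((q ^ (2⁻¹ : ℝ) : ℝ) : ℂ) * (((q ^ (2 * ((r : ℝ) ^ 2 / 2)) : ℝ) : ℂ) *
            (((q ^ (2 * ((s : ℝ) ^ 2 / 2)) : ℝ) : ℂ) *
              (((q ^ ((r : ℤ) : ℝ) : ℝ) : ℂ) * ((q ^ ((s : ℤ) : ℝ) : ℝ) : ℂ)))) := by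
        rw [cast_rpow_mul q hq, cast_rpow_mul q hq, cast_rpow_mul q hq, cast_rpow_mul q hq]
        congr 1
        rw [hEm, hEn]
        push_cast
        ring
      rw [hm]
      field_simp
  · rw [Function.support_subset_iff']
    rintro ⟨m, n⟩ hp
    have hodd : ¬ Odd (m + n) := by
      rintro ⟨r, hr⟩
      exact hp ⟨(r, m - r - 1), by ext <;> (simp only; omega)⟩
    have heven : Even (m + n) := Int.not_odd_iff_even.mp hodd
    simp only [neg_neg]
    have e1 : (-x) ^ m = (-1 : ℂ) ^ m * x ^ m := by
      rw [show (-x) = (-1 : ℂ) * x by ring, mul_zpow]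
    have e2 : (-y) ^ n = (-1 : ℂ) ^ n * y ^ n := by
      rw [show (-y) = (-1 : ℂ) * y by ring, mul_zpow]
    have hsign : ((-1 : ℂ)) ^ m * (-1 : ℂ) ^ n = 1 := by
      rw [← zpow_add₀ (by norm_num : (-1 : ℂ) ≠ 0)]
      exact Even.neg_one_zpow heven
    rw [e1, e2]
    linear_combination (((q ^ (((m : ℝ) ^ 2) / 2) : ℝ) : ℂ)
      * ((q ^ (((n : ℝ) ^ 2) / 2) : ℝ) : ℂ) * x ^ m * y ^ n) * hsign

theorem theta_sum_formula_shifted (q : ℝ) (α β w : ℂ)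
    (hq : 0 < q) (hq1 : q < 1) (hα : α ≠ 0) (hβ : β ≠ 0) (hw : w ≠ 0)
    (hc : α * β ^ 2 = -1)
    (hd1 : jacobiTheta' (q ^ 2) ((q : ℂ) * (α * β / ((Real.sqrt q : ℂ) * w))) *
            jacobiTheta' (q ^ 2) ((q : ℂ) * (α * β * w / (Real.sqrt q : ℂ))) ≠ 0)
    (hd2 : -(jacobiTheta' q (α * β / (Real.sqrt q : ℂ)) * jacobiTheta' q (w / (α * β ^ 2))) +
            jacobiTheta' q w * jacobiTheta' q (1 / (β * (Real.sqrt q : ℂ))) ≠ 0) :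
    1 / (jacobiTheta' (q ^ 2) ((q : ℂ) * (α * β / ((Real.sqrt q : ℂ) * w))) *
          jacobiTheta' (q ^ 2) ((q : ℂ) * (α * β * w / (Real.sqrt q : ℂ)))) =
      2 * α * β /
        (-(jacobiTheta' q (α * β / (Real.sqrt q : ℂ)) * jacobiTheta' q (w / (α * β ^ 2))) +
          jacobiTheta' q w * jacobiTheta' q (1 / (β * (Real.sqrt q : ℂ)))) := by
  
  have hα' : α = -(1 / β ^ 2) := by
    field_simp
    linear_combination hc
  subst hα'
  have hsqR : (0 : ℝ) < Real.sqrt q := Real.sqrt_pos.mpr hq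
  have hsqC : ((Real.sqrt q : ℝ) : ℂ) ≠ 0 := by exact_mod_cast hsqR.ne'
  have hqC : (q : ℂ) ≠ 0 := by exact_mod_cast hq.ne'
  have hq2 : (0:ℝ) < q ^ 2 := by positivity
  set sq : ℂ := ((Real.sqrt q : ℝ) : ℂ) with hsqdef
  set c : ℂ := 1 / (β * sq) with hcdef
  have hc0 : c ≠ 0 := by
    rw [hcdef]
    exact one_div_ne_zero (mul_ne_zero hβ hsqC)
  set A1 : ℂ := (q : ℂ) * (-(1 / β ^ 2) * β / (sq * w)) with hA1def
  set A2 : ℂ := (q : ℂ) * (-(1 / β ^ 2) * β * w / sq) with hA2def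
  have hA1 : A1 ≠ 0 := by
    rw [hA1def]
    have : -(1 / β ^ 2) * β / (sq * w) ≠ 0 := by
      apply div_ne_zero (mul_ne_zero ?_ hβ) (mul_ne_zero hsqC hw)
      simpa using pow_ne_zero 2 hβ
    exact mul_ne_zero hqC this
  have e1 : -(1 / β ^ 2) * β / sq = -c := by
    rw [hcdef]; field_simp
  have e2 : w / (-(1 / β ^ 2) * β ^ 2) = -w := by
    field_simp
  have e3 : -((q : ℂ) * w * c) = A2 := by
    rw [hcdef, hA2def]; field_simp
  have e4 : -((q : ℂ) * w / c) = ((q ^ 2 : ℝ) : ℂ) * A1⁻¹ := by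
    rw [hcdef, hA1def]
    push_cast
    field_simp
  have hstep : jacobiTheta' (q ^ 2) (-((q : ℂ) * w / c))
      = -(q : ℂ)⁻¹ * A1 * jacobiTheta' (q ^ 2) A1 := by
    rw [e4, theta_qmul (q ^ 2) hq2 A1⁻¹ (inv_ne_zero hA1), inv_inv, theta_inv,
      Real.sqrt_sq hq.le]
  have hD : -(jacobiTheta' q (-(1/β^2) * β / sq) * jacobiTheta' q (w / (-(1/β^2) * β ^ 2))) +
      jacobiTheta' q w * jacobiTheta' q (1 / (β * sq))
      = 2 * -(1/β^2) * β * (jacobiTheta' (q ^ 2) A1 * jacobiTheta' (q ^ 2) A2) := by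
    rw [e1, e2]
    calc -(jacobiTheta' q (-c) * jacobiTheta' q (-w)) + jacobiTheta' q w * jacobiTheta' q c
        = jacobiTheta' q w * jacobiTheta' q c
          - jacobiTheta' q (-w) * jacobiTheta' q (-c) := by ring
      _ = -2 * w * sq * (jacobiTheta' (q ^ 2) (-((q : ℂ) * w * c)) *
            jacobiTheta' (q ^ 2) (-((q : ℂ) * w / c))) := theta_prod_diff q hq hq1 w c hw hc0
      _ = -2 * w * sq * (jacobiTheta' (q ^ 2) A2 *
            (-(q : ℂ)⁻¹ * A1 * jacobiTheta' (q ^ 2) A1)) := by rw [e3, hstep]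
      _ = 2 * -(1/β^2) * β * (jacobiTheta' (q ^ 2) A1 * jacobiTheta' (q ^ 2) A2) := by
          rw [hA1def]
          field_simp
  rw [hD] at hd2 ⊢
  rw [div_eq_div_iff hd1 (by exact fun h => hd2 h)]
  ring
end

section
/- For complex z with |z| < 1 and real α, the limit as q → 1⁻ of (z q^α; q)_∞ / (z; q)_∞ equals (1 − z)^{−α}. -/
open Complex Filter Topology

/-- MVT bound: `|1 - t^c| ≤ |c| * (1-t) * t^(-(|c|+1))` for `t ∈ (0,1)`. -/
lemma abs_one_sub_rpow_le {t : ℝ} (ht0 : 0 < t) (ht1 : t < 1) (c : ℝ) :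
    |1 - t ^ c| ≤ |c| * (1 - t) * t ^ (-(|c| + 1)) := by
  have hcont : ContinuousOn (fun x : ℝ => x ^ c) (Set.Icc t 1) := by
    intro x hx
    exact (Real.continuousAt_rpow_const x c
      (Or.inl (lt_of_lt_of_le ht0 hx.1).ne')).continuousWithinAt
  have hderiv : ∀ x ∈ Set.Ioo t 1, HasDerivAt (fun x : ℝ => x ^ c) (c * x ^ (c - 1)) x := by
    intro x hx
    exact Real.hasDerivAt_rpow_const (Or.inl (lt_of_lt_of_le ht0 hx.1.le).ne')
  obtain ⟨ξ, hξ, hξeq⟩ := exists_hasDerivAt_eq_slope (fun x : ℝ => x ^ c)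
    (fun x => c * x ^ (c - 1)) ht1 hcont hderiv
  have hξ0 : 0 < ξ := lt_trans ht0 hξ.1
  have htne : (1:ℝ) - t ≠ 0 := by linarith
  have key : 1 - t ^ c = c * ξ ^ (c - 1) * (1 - t) := by
    rw [hξeq, Real.one_rpow, div_mul_cancel₀ _ htne]
  have hb : |ξ ^ (c - 1)| ≤ t ^ (-(|c| + 1)) := by
    rw [_root_.abs_of_nonneg (Real.rpow_nonneg hξ0.le _)]
    have hle1 : ξ ^ (c - 1) ≤ ξ ^ (-(|c| + 1)) := by
      apply Real.rpow_le_rpow_of_exponent_ge hξ0 hξ.2.le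
      have := neg_abs_le c; linarith
    have hle2 : ξ ^ (-(|c| + 1)) ≤ t ^ (-(|c| + 1)) := by
      rw [Real.rpow_neg hξ0.le, Real.rpow_neg ht0.le]
      exact inv_anti₀ (Real.rpow_pos_of_pos ht0 _)
        (Real.rpow_le_rpow ht0.le hξ.1.le (by positivity))
    exact hle1.trans hle2
  calc |1 - t ^ c| = |c| * |ξ ^ (c - 1)| * (1 - t) := by
        rw [key, abs_mul, abs_mul, _root_.abs_of_nonneg (by linarith : (0:ℝ) ≤ 1 - t)]
    _ ≤ |c| * t ^ (-(|c| + 1)) * (1 - t) := by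
        have h1 : 0 ≤ |c| := abs_nonneg c
        have h2 : (0:ℝ) ≤ 1 - t := by linarith
        exact mul_le_mul_of_nonneg_right (mul_le_mul_of_nonneg_left hb h1) h2
    _ = |c| * (1 - t) * t ^ (-(|c| + 1)) := by ring

lemma qS_summable (a : ℂ) (ha : ‖a‖ < 1) {q : ℝ} (hq0 : 0 < q) (hq1 : q < 1) :
    Summable (fun n : ℕ => a ^ n / (n * (1 - (q:ℂ) ^ n))) := by
  have hne : (1:ℝ) - q ≠ 0 := by linarith
  apply Summable.of_norm_bounded (g := fun n : ℕ => (1 - q)⁻¹ * ‖a‖ ^ n)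
    (((summable_geometric_of_lt_one (norm_nonneg a) ha)).mul_left _)
  intro n
  rcases Nat.eq_zero_or_pos n with rfl | hn
  · simp only [pow_zero, Nat.cast_zero, zero_mul, div_zero, norm_zero, mul_one]
    rw [inv_nonneg]; linarith
  have hqn : q ^ n < 1 := pow_lt_one₀ hq0.le hq1 hn.ne'
  have hden : (1:ℝ) - q ≤ ‖((n:ℂ) * (1 - (q:ℂ) ^ n))‖ := by
    rw [norm_mul]
    have h1 : (1:ℝ) ≤ ‖(n:ℂ)‖ := by
      rw [Complex.norm_natCast]; exact_mod_cast hn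
    have h2 : (1:ℝ) - q ≤ ‖(1 - (q:ℂ) ^ n)‖ := by
      have hc : ((1 - q ^ n : ℝ) : ℂ) = 1 - (q:ℂ) ^ n := by push_cast; ring
      rw [← hc, Complex.norm_real, Real.norm_eq_abs,
        _root_.abs_of_nonneg (by linarith : (0:ℝ) ≤ 1 - q ^ n)]
      have : q ^ n ≤ q ^ 1 := pow_le_pow_of_le_one hq0.le hq1.le hn
      nlinarith [this, pow_pos hq0 n]
    calc (1:ℝ) - q = 1 * (1 - q) := (one_mul _).symm
      _ ≤ ‖(n:ℂ)‖ * ‖(1 - (q:ℂ) ^ n)‖ :=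
          mul_le_mul h1 h2 (by linarith) (norm_nonneg _)
  rw [norm_div, norm_pow]
  rw [div_le_iff₀ (lt_of_lt_of_le (by linarith) hden)]
  have h := mul_le_mul_of_nonneg_left hden
    (show 0 ≤ (1 - q)⁻¹ * ‖a‖ ^ n by
      have : 0 < (1 - q)⁻¹ := by rw [inv_pos]; linarith
      positivity)
  have he : (1 - q)⁻¹ * ‖a‖ ^ n * (1 - q) = ‖a‖ ^ n := by
    field_simp
  calc ‖a‖ ^ n = (1 - q)⁻¹ * ‖a‖ ^ n * (1 - q) := he.symm
    _ ≤ (1 - q)⁻¹ * ‖a‖ ^ n * ‖((n:ℂ) * (1 - (q:ℂ) ^ n))‖ := h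

lemma qPochInf_eq_exp (a : ℂ) (ha : ‖a‖ < 1) {q : ℝ} (hq0 : 0 < q) (hq1 : q < 1) :
    qPochInf a (q:ℂ) = Complex.exp (-∑' n : ℕ, a ^ n / (n * (1 - (q:ℂ) ^ n))) := by
  have hqpow : ∀ k : ℕ, ‖a * (q:ℂ) ^ k‖ < 1 := by
    intro k
    rw [norm_mul, norm_pow, Complex.norm_real, Real.norm_eq_abs, _root_.abs_of_nonneg hq0.le]
    calc ‖a‖ * q ^ k ≤ ‖a‖ * 1 := by
          apply mul_le_mul_of_nonneg_left _ (norm_nonneg a)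
          exact pow_le_one₀ hq0.le hq1.le
      _ < 1 := by rwa [mul_one]
  have hne : ∀ k : ℕ, 1 - a * (q:ℂ) ^ k ≠ 0 := by
    intro k h
    rw [sub_eq_zero] at h
    have := hqpow k
    rw [← h, norm_one] at this
    exact lt_irrefl 1 this
  have hlog_sum : Summable (fun k : ℕ => Complex.log (1 - a * (q:ℂ) ^ k)) := by
    apply Summable.of_norm_bounded
      (g := fun k : ℕ => (‖a‖ * ((1 - ‖a‖)⁻¹ / 2 + 1)) * q ^ k)
      ((summable_geometric_of_lt_one hq0.le hq1).mul_left _)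
    intro k
    set w := a * (q:ℂ) ^ k with hw
    have hw1 : ‖w‖ < 1 := hqpow k
    have hwa : ‖w‖ ≤ ‖a‖ * q ^ k := by
      rw [hw, norm_mul, norm_pow, Complex.norm_real, Real.norm_eq_abs,
        _root_.abs_of_nonneg hq0.le]
    have hwa' : ‖w‖ ≤ ‖a‖ := by
      calc ‖w‖ ≤ ‖a‖ * q ^ k := hwa
        _ ≤ ‖a‖ * 1 := mul_le_mul_of_nonneg_left (pow_le_one₀ hq0.le hq1.le) (norm_nonneg a)
        _ = ‖a‖ := mul_one _
    have h1 : Complex.log (1 - w) = Complex.log (1 + (-w)) := by rw [← sub_eq_add_neg]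
    have h2 : ‖Complex.log (1 + (-w))‖ ≤ ‖(-w)‖ ^ 2 * (1 - ‖(-w)‖)⁻¹ / 2 + ‖(-w)‖ :=
      Complex.norm_log_one_add_le (by rwa [norm_neg])
    rw [h1]
    rw [norm_neg] at h2
    have ha1 : (0:ℝ) < 1 - ‖a‖ := by linarith
    have hwb : (1 - ‖w‖)⁻¹ ≤ (1 - ‖a‖)⁻¹ := by
      apply inv_anti₀ ha1; linarith
    have hsq : ‖w‖ ^ 2 ≤ ‖w‖ := by nlinarith [norm_nonneg w]
    calc ‖Complex.log (1 + (-w))‖ ≤ ‖w‖ ^ 2 * (1 - ‖w‖)⁻¹ / 2 + ‖w‖ := h2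
      _ ≤ ‖w‖ * (1 - ‖a‖)⁻¹ / 2 + ‖w‖ := by
          have : ‖w‖ ^ 2 * (1 - ‖w‖)⁻¹ ≤ ‖w‖ * (1 - ‖a‖)⁻¹ := by
            apply mul_le_mul hsq hwb _ (norm_nonneg w)
            rw [inv_nonneg]; linarith [hw1]
          linarith
      _ = ‖w‖ * ((1 - ‖a‖)⁻¹ / 2 + 1) := by ring
      _ ≤ (‖a‖ * q ^ k) * ((1 - ‖a‖)⁻¹ / 2 + 1) := by
          apply mul_le_mul_of_nonneg_right hwa
          have : (0:ℝ) ≤ (1 - ‖a‖)⁻¹ := by rw [inv_nonneg]; linarith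
          linarith
      _ = (‖a‖ * ((1 - ‖a‖)⁻¹ / 2 + 1)) * q ^ k := by ring
  have step1 : qPochInf a (q:ℂ) = Complex.exp (∑' k : ℕ, Complex.log (1 - a * (q:ℂ) ^ k)) := by
    have := Complex.cexp_tsum_eq_tprod (f := fun k : ℕ => 1 - a * (q:ℂ) ^ k) hne hlog_sum
    exact this.symm
  set F : ℕ × ℕ → ℂ := fun p => -((a * (q:ℂ) ^ p.1) ^ p.2 / p.2) with hF
  have hFs : Summable F := by
    apply Summable.of_norm_bounded (g := fun p : ℕ × ℕ => q ^ p.1 * ‖a‖ ^ p.2)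
      (Summable.mul_of_nonneg (summable_geometric_of_lt_one hq0.le hq1)
        (summable_geometric_of_lt_one (norm_nonneg a) ha)
        (fun k => by positivity) (fun n => by positivity))
    rintro ⟨k, n⟩
    rcases Nat.eq_zero_or_pos n with rfl | hn
    · simp [hF]
      positivity
    have h1 : ‖F (k, n)‖ ≤ ‖a * (q:ℂ) ^ k‖ ^ n := by
      rw [hF]
      simp only [norm_neg, norm_div, norm_pow, Complex.norm_natCast]
      apply div_le_self (by positivity)
      exact_mod_cast hn
    have h2 : ‖a * (q:ℂ) ^ k‖ ^ n = ‖a‖ ^ n * (q ^ k) ^ n := by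
      rw [norm_mul, norm_pow, Complex.norm_real, Real.norm_eq_abs,
        _root_.abs_of_nonneg hq0.le, mul_pow]
    have h3 : (q ^ k) ^ n ≤ q ^ k := by
      rw [← pow_mul]
      exact pow_le_pow_of_le_one hq0.le hq1.le (Nat.le_mul_of_pos_right k hn)
    calc ‖F (k, n)‖ ≤ ‖a‖ ^ n * (q ^ k) ^ n := h1.trans_eq h2
      _ ≤ ‖a‖ ^ n * q ^ k := mul_le_mul_of_nonneg_left h3 (by positivity)
      _ = q ^ k * ‖a‖ ^ n := mul_comm _ _
  have hrow : ∀ k : ℕ, HasSum (fun n : ℕ => F (k, n)) (Complex.log (1 - a * (q:ℂ) ^ k)) := by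
    intro k
    have := (Complex.hasSum_taylorSeries_neg_log (hqpow k)).neg
    rw [neg_neg] at this
    exact this
  have hcol : ∀ n : ℕ, HasSum (fun k : ℕ => F (k, n)) (-(a ^ n / (n * (1 - (q:ℂ) ^ n)))) := by
    intro n
    rcases Nat.eq_zero_or_pos n with rfl | hn
    · simp only [hF, pow_zero, Nat.cast_zero, div_zero, neg_zero, zero_mul]
      exact hasSum_zero
    have hqn : ‖(q:ℂ) ^ n‖ < 1 := by
      rw [norm_pow, Complex.norm_real, Real.norm_eq_abs, _root_.abs_of_nonneg hq0.le]
      exact pow_lt_one₀ hq0.le hq1 hn.ne'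
    have hgeo := (hasSum_geometric_of_norm_lt_one hqn).mul_left (a ^ n / n)
    have heq : (fun k : ℕ => a ^ n / n * ((q:ℂ) ^ n) ^ k) = fun k : ℕ => -F (k, n) := by
      funext k
      simp only [hF, neg_neg]
      rw [mul_pow, ← pow_mul, ← pow_mul, mul_comm k n, div_mul_eq_mul_div]
    rw [heq] at hgeo
    have := hgeo.neg
    simp only [neg_neg] at this
    rw [← div_div, div_eq_mul_inv (a ^ n / n)]
    exact this
  have step2 : (∑' k : ℕ, Complex.log (1 - a * (q:ℂ) ^ k))
      = -∑' n : ℕ, a ^ n / (n * (1 - (q:ℂ) ^ n)) := by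
    calc (∑' k : ℕ, Complex.log (1 - a * (q:ℂ) ^ k))
        = ∑' (k : ℕ) (n : ℕ), F (k, n) := tsum_congr fun k => ((hrow k).tsum_eq).symm
      _ = ∑' (n : ℕ) (k : ℕ), F (k, n) := (Summable.tsum_comm (f := fun k n => F (k, n)) hFs).symm
      _ = ∑' n : ℕ, -(a ^ n / (n * (1 - (q:ℂ) ^ n))) := tsum_congr fun n => (hcol n).tsum_eq
      _ = -∑' n : ℕ, a ^ n / (n * (1 - (q:ℂ) ^ n)) := tsum_neg
  rw [step1, step2]

lemma hterm_tendsto (z : ℂ) (α : ℝ) (n : ℕ) :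
    Tendsto (fun q : ℝ => z ^ n * (1 - ((q ^ α : ℝ) : ℂ) ^ n) / (n * (1 - (q:ℂ) ^ n)))
      (nhdsWithin 1 (Set.Ioo 0 1)) (𝓝 ((α:ℂ) * z ^ n / n)) := by
  rcases Nat.eq_zero_or_pos n with rfl | hn
  · simp only [pow_zero, sub_self, mul_zero, Nat.cast_zero, zero_mul, div_zero, mul_one]
    exact tendsto_const_nhds
  have hnR : ((n:ℝ)) ≠ 0 := by exact_mod_cast hn.ne'
  have hr : Tendsto (fun q : ℝ => (1 - (q ^ α) ^ n) / (1 - q ^ n))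
      (nhdsWithin 1 (Set.Ioo 0 1)) (𝓝 α) := by
    have hd1 : HasDerivAt (fun q : ℝ => q ^ (α * n)) (α * n) 1 := by
      have := Real.hasDerivAt_rpow_const (x := 1) (p := α * n) (Or.inl one_ne_zero)
      simpa using this
    have hd2 : HasDerivAt (fun q : ℝ => q ^ n) (n : ℝ) 1 := by
      have := hasDerivAt_pow n (1:ℝ)
      simpa using this
    have hs1 := hasDerivAt_iff_tendsto_slope.mp hd1
    have hs2 := hasDerivAt_iff_tendsto_slope.mp hd2
    have hmono : nhdsWithin (1:ℝ) (Set.Ioo 0 1) ≤ nhdsWithin 1 {(1:ℝ)}ᶜ :=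
      nhdsWithin_mono 1 (fun x hx => ne_of_lt hx.2)
    have hdiv : Tendsto (fun q : ℝ => slope (fun q : ℝ => q ^ (α * n)) 1 q
        / slope (fun q : ℝ => q ^ n) 1 q) (nhdsWithin 1 (Set.Ioo 0 1)) (𝓝 (α * n / n)) :=
      Tendsto.div (hs1.mono_left hmono) (hs2.mono_left hmono) hnR
    rw [mul_div_assoc, div_self hnR, mul_one] at hdiv
    apply hdiv.congr'
    filter_upwards [self_mem_nhdsWithin] with q hq
    have hq0 : 0 < q := hq.1
    have hq1 : q < 1 := hq.2
    have hqne : q - 1 ≠ 0 := by intro h; apply absurd hq1; rw [sub_eq_zero] at h; simp [h]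
    have hpow : (q ^ α) ^ n = q ^ (α * n) := by
      rw [← Real.rpow_natCast (q ^ α) n, ← Real.rpow_mul hq0.le]
    have hqn1 : q ^ n - 1 ≠ 0 := by
      have : q ^ n < 1 := pow_lt_one₀ hq0.le hq1 hn.ne'
      intro h; rw [sub_eq_zero] at h; rw [h] at this; exact lt_irrefl 1 this
    have hqn1' : (1:ℝ) - q ^ n ≠ 0 := fun h => hqn1 (by linarith [sub_eq_zero.mp h])
    rw [slope_def_field, slope_def_field, Real.one_rpow, one_pow, hpow]
    field_simp
    ring
  have hC : Tendsto (fun q : ℝ => (z ^ n / n) * (((1 - (q ^ α) ^ n) / (1 - q ^ n) : ℝ) : ℂ))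
      (nhdsWithin 1 (Set.Ioo 0 1)) (𝓝 ((z ^ n / n) * (α : ℂ))) :=
    (((Complex.continuous_ofReal.tendsto α).comp hr).const_mul _)
  have heq : (α:ℂ) * z ^ n / n = z ^ n / n * α := by ring
  rw [heq]
  apply hC.congr'
  filter_upwards [self_mem_nhdsWithin] with q hq
  push_cast
  rw [mul_div_mul_comm]

theorem qPochInf_ratio_limit (z : ℂ) (α : ℝ) (hz : ‖z‖ < 1) :
    Tendsto
      (fun q : ℝ => qPochInf (z * ((q ^ α : ℝ) : ℂ)) (q : ℂ) / qPochInf z (q : ℂ))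
      (nhdsWithin 1 (Set.Ioo 0 1))
      (nhds ((1 - z) ^ ((-α : ℝ) : ℂ))) := by
  have hz' : ‖z‖ < 1 := hz
  have hz1 : (1:ℂ) - z ≠ 0 := by
    intro h
    rw [sub_eq_zero] at h
    rw [← h, norm_one] at hz'
    exact lt_irrefl 1 hz'
  set b : ℝ := (‖z‖ + 1) / 2 with hb
  have hzb : ‖z‖ < b := by rw [hb]; linarith
  have hb0 : (0:ℝ) < b := by rw [hb]; positivity
  have hb1 : b < 1 := by rw [hb]; linarith
  set c : ℝ := |α| + 1 with hc
  have hc0 : (0:ℝ) < c := by rw [hc]; positivity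
  set q₀ : ℝ := b ^ (1/c) with hq₀def
  have hq₀0 : 0 < q₀ := Real.rpow_pos_of_pos hb0 _
  have hq₀1 : q₀ < 1 := Real.rpow_lt_one hb0.le hb1 (by positivity)
  have hq₀pow : q₀ ^ c = b := by
    rw [hq₀def, ← Real.rpow_mul hb0.le, one_div_mul_cancel hc0.ne', Real.rpow_one]
  set ρ : ℝ := ‖z‖ / b with hρ
  have hρ0 : (0:ℝ) ≤ ρ := by rw [hρ]; positivity
  have hρ1 : ρ < 1 := (div_lt_one hb0).mpr hzb
  -- basic facts for q ∈ Ioo q₀ 1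
  have hqfacts : ∀ q : ℝ, q ∈ Set.Ioo q₀ 1 → 0 < q ∧ q < 1 ∧ q ^ (-c) ≤ b⁻¹ := by
    intro q hq
    have hq0 : 0 < q := lt_trans hq₀0 hq.1
    refine ⟨hq0, hq.2, ?_⟩
    have h1 : b ≤ q ^ c := by
      rw [← hq₀pow]
      exact Real.rpow_le_rpow hq₀0.le hq.1.le hc0.le
    rw [Real.rpow_neg hq0.le]
    exact inv_anti₀ hb0 h1
  have hev : ∀ᶠ q in nhdsWithin (1:ℝ) (Set.Ioo 0 1), q ∈ Set.Ioo q₀ 1 := by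
    filter_upwards [eventually_nhdsWithin_of_eventually_nhds (eventually_gt_nhds hq₀1),
      self_mem_nhdsWithin] with q h1 h2
    exact ⟨h1, h2.2⟩
  -- the series limit
  have hsum_lim : Tendsto
      (fun q : ℝ => ∑' n : ℕ, z ^ n * (1 - ((q ^ α : ℝ) : ℂ) ^ n) / (n * (1 - (q:ℂ) ^ n)))
      (nhdsWithin 1 (Set.Ioo 0 1)) (𝓝 (∑' n : ℕ, (α:ℂ) * z ^ n / n)) := by
    apply tendsto_tsum_of_dominated_convergence (bound := fun n : ℕ => |α| * ρ ^ n)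
    · exact (summable_geometric_of_lt_one hρ0 hρ1).mul_left _
    · exact fun n => hterm_tendsto z α n
    · filter_upwards [hev] with q hq
      intro n
      obtain ⟨hq0, hq1, hqc⟩ := hqfacts q hq
      rcases Nat.eq_zero_or_pos n with rfl | hn
      · simp only [pow_zero, sub_self, mul_zero, Nat.cast_zero, zero_mul, div_zero,
          norm_zero]
        positivity
      have hqn0 : 0 < q ^ n := pow_pos hq0 n
      have hqn1 : q ^ n < 1 := pow_lt_one₀ hq0.le hq1 hn.ne'
      have hswap : (q ^ α) ^ n = (q ^ n) ^ α := by
        rw [← Real.rpow_natCast (q ^ α) n, ← Real.rpow_mul hq0.le,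
          ← Real.rpow_natCast q n, ← Real.rpow_mul hq0.le, mul_comm]
      have hswap2 : (q ^ n) ^ (-c) = (q ^ (-c)) ^ n := by
        rw [← Real.rpow_natCast (q ^ (-c)) n, ← Real.rpow_mul hq0.le,
          ← Real.rpow_natCast q n, ← Real.rpow_mul hq0.le, mul_comm]
      have key := abs_one_sub_rpow_le hqn0 hqn1 α
      rw [← hc] at key
      have hE : ‖z ^ n * (1 - ((q ^ α : ℝ) : ℂ) ^ n) / ((n:ℂ) * (1 - (q:ℂ) ^ n))‖
          = ‖z‖ ^ n * |1 - (q ^ α) ^ n| / ((n:ℝ) * (1 - q ^ n)) := by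
        have e1 : (1 - ((q ^ α : ℝ):ℂ) ^ n) = (((1 - (q ^ α) ^ n : ℝ)):ℂ) := by
          push_cast; ring
        have e2 : ((n:ℂ) * (1 - (q:ℂ) ^ n)) = (((n * (1 - q ^ n) : ℝ)):ℂ) := by
          push_cast; ring
        rw [norm_div, norm_mul, norm_pow, e1, e2, Complex.norm_real, Complex.norm_real,
          Real.norm_eq_abs, Real.norm_eq_abs,
          _root_.abs_of_nonneg (by nlinarith : (0:ℝ) ≤ n * (1 - q ^ n))]
      rw [hE]
      have hd0 : (0:ℝ) < (n:ℝ) * (1 - q ^ n) := by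
        have : (1:ℝ) ≤ n := by exact_mod_cast hn
        nlinarith
      have hqnne : (1:ℝ) - q ^ n ≠ 0 := by nlinarith
      have hnne : ((n:ℝ)) ≠ 0 := by exact_mod_cast hn.ne'
      calc ‖z‖ ^ n * |1 - (q ^ α) ^ n| / ((n:ℝ) * (1 - q ^ n))
          ≤ ‖z‖ ^ n * (|α| * (1 - q ^ n) * (q ^ n) ^ (-c)) / ((n:ℝ) * (1 - q ^ n)) := by
            gcongr
            rwa [hswap]
        _ = |α| * (‖z‖ * q ^ (-c)) ^ n / n := by
            rw [mul_pow, ← hswap2]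
            field_simp
        _ ≤ |α| * (‖z‖ * q ^ (-c)) ^ n := by
            apply div_le_self (by positivity) (by exact_mod_cast hn)
        _ ≤ |α| * ρ ^ n := by
            apply mul_le_mul_of_nonneg_left _ (abs_nonneg α)
            apply pow_le_pow_left₀ (by positivity)
            calc ‖z‖ * q ^ (-c) ≤ ‖z‖ * b⁻¹ := mul_le_mul_of_nonneg_left hqc (norm_nonneg z)
              _ = ρ := by rw [hρ, div_eq_mul_inv]
  -- value of the limit
  have htsum_val : (∑' n : ℕ, (α:ℂ) * z ^ n / n) = (α:ℂ) * (-Complex.log (1 - z)) := by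
    have h1 : (fun n : ℕ => (α:ℂ) * z ^ n / n) = fun n : ℕ => (α:ℂ) * (z ^ n / n) := by
      funext n; ring
    rw [h1, tsum_mul_left, (Complex.hasSum_taylorSeries_neg_log hz').tsum_eq]
  have hval : Complex.exp (∑' n : ℕ, (α:ℂ) * z ^ n / n) = (1 - z) ^ ((-α : ℝ):ℂ) := by
    rw [htsum_val, Complex.cpow_def_of_ne_zero hz1]
    congr 1
    push_cast
    ring
  have hexp := (Complex.continuous_exp.tendsto _).comp hsum_lim
  rw [← hval]
  apply hexp.congr'
  filter_upwards [hev] with q hq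
  obtain ⟨hq0, hq1, hqc⟩ := hqfacts q hq
  have hza : ‖z * ((q ^ α : ℝ):ℂ)‖ < 1 := by
    rw [norm_mul, Complex.norm_real, Real.norm_eq_abs,
      _root_.abs_of_nonneg (Real.rpow_nonneg hq0.le α)]
    have h1 : q ^ α ≤ q ^ (-c) := by
      apply Real.rpow_le_rpow_of_exponent_ge hq0 hq1.le
      rw [hc]; have := neg_abs_le α; linarith
    calc ‖z‖ * q ^ α ≤ ‖z‖ * b⁻¹ :=
          mul_le_mul_of_nonneg_left (h1.trans hqc) (norm_nonneg z)
      _ = ρ := by rw [hρ, div_eq_mul_inv]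
      _ < 1 := hρ1
  show Complex.exp _ = _
  rw [qPochInf_eq_exp _ hza hq0 hq1, qPochInf_eq_exp z hz' hq0 hq1, ← Complex.exp_sub]
  congr 1
  have hS1 := qS_summable (z * ((q ^ α : ℝ):ℂ)) hza hq0 hq1
  have hS2 := qS_summable z hz' hq0 hq1
  have hre : -(∑' n : ℕ, (z * ((q ^ α : ℝ):ℂ)) ^ n / (n * (1 - (q:ℂ) ^ n)))
      - -(∑' n : ℕ, z ^ n / (n * (1 - (q:ℂ) ^ n)))
      = ∑' n : ℕ, (z ^ n / (n * (1 - (q:ℂ) ^ n))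
        - (z * ((q ^ α : ℝ):ℂ)) ^ n / (n * (1 - (q:ℂ) ^ n))) := by
    rw [Summable.tsum_sub hS2 hS1]
    ring
  rw [hre]
  apply tsum_congr
  intro n
  rw [mul_pow]
  ring
end
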